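/- (Cayley method, strongly monotone case.) Let η ∈ ℝⁿ be a positive vector and let F : ℝⁿ → ℝⁿ be continuously differentiable with μ_{∞,η⁻¹}(−DF(x)) ≤ −c for all x ∈ ℝⁿ, where c > 0, and let d > 0 be a diagonal bound for F. Let x* be the unique zero of F, let α ∈ (0, 1/d], and let (x_k) and (y_k) be sequences satisfying y_k + αF(y_k) = x_k and x_{k+1} = 2y_k − x_k for all k. Then ‖x_{k+1} − x*‖_{∞,η⁻¹} ≤ ((1 − αc)/(1 + αc)) ‖x_k − x*‖_{∞,η⁻¹} for all k; consequently x_k → x* as k → ∞. -/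

import Mathlib

open Filter

/-- Diagonally weighted ℓ∞ norm: ‖x‖_{∞,η⁻¹} = max_i |x_i|/η_i. -/
noncomputable def wNorm {n : ℕ} (η x : Fin n → ℝ) : ℝ := ⨆ i, |x i| / η i

/-- Diagonally weighted ℓ∞ logarithmic norm of a matrix. -/
noncomputable def logNorm {n : ℕ} (η : Fin n → ℝ) (A : Matrix (Fin n) (Fin n) ℝ) : ℝ :=
  ⨆ i, (A i i + ∑ j ∈ Finset.univ.erase i, (η j / η i) * |A i j|)

/-- Jacobian matrix of `F` at `x`: (DF(x))_{ij} = ∂F_i/∂x_j. -/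
noncomputable def jac {n : ℕ} (F : (Fin n → ℝ) → (Fin n → ℝ)) (x : Fin n → ℝ) :
    Matrix (Fin n) (Fin n) ℝ :=
  fun i j => fderiv ℝ F x (Pi.single j 1) i

lemma fderiv_pi_apply {n : ℕ} {F : (Fin n → ℝ) → (Fin n → ℝ)}
    (p w : Fin n → ℝ) (i : Fin n) :
    fderiv ℝ F p w i = ∑ j, jac F p i j * w j := by
  have h1 : w = ∑ j, w j • (Pi.single j (1:ℝ) : Fin n → ℝ) := by
    conv_lhs => rw [pi_eq_sum_univ w]
    refine Finset.sum_congr rfl fun j _ => ?_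
    congr 1
    funext k
    simp [Pi.single_apply, eq_comm]
  conv_lhs => rw [h1]
  rw [map_sum]
  rw [Finset.sum_apply]
  refine Finset.sum_congr rfl fun j _ => ?_
  rw [map_smul]
  simp [jac, mul_comm]

lemma cont_integrand {n : ℕ} {F : (Fin n → ℝ) → (Fin n → ℝ)} (hF : ContDiff ℝ 1 F)
    (v w : Fin n → ℝ) (i : Fin n) :
    Continuous fun t : ℝ => fderiv ℝ F (v + t • w) w i := by
  have hγ : Continuous fun t : ℝ => v + t • w :=
    continuous_const.add (continuous_id.smul continuous_const)
  have h1 : Continuous fun t : ℝ => fderiv ℝ F (v + t • w) :=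
    (hF.continuous_fderiv one_ne_zero).comp hγ
  exact (continuous_apply i).comp
    (((ContinuousLinearMap.apply ℝ (Fin n → ℝ) w).continuous).comp h1)

lemma diff_eq_integral {n : ℕ} {F : (Fin n → ℝ) → (Fin n → ℝ)} (hF : ContDiff ℝ 1 F)
    (u v : Fin n → ℝ) (i : Fin n) :
    F u i - F v i = ∫ t in (0:ℝ)..1, fderiv ℝ F (v + t • (u - v)) (u - v) i := by
  set γ : ℝ → (Fin n → ℝ) := fun t => v + t • (u - v) with hγdef
  have hγd : ∀ t : ℝ, HasDerivAt γ (u - v) t := fun t => by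
    have h := ((hasDerivAt_id t).smul_const (u - v)).const_add v
    rw [one_smul] at h; exact h
  have hFd : ∀ t : ℝ, HasDerivAt (fun s => F (γ s) i) (fderiv ℝ F (γ t) (u - v) i) t := by
    intro t
    have h1 : HasDerivAt (fun s => F (γ s)) (fderiv ℝ F (γ t) (u - v)) t :=
      ((hF.differentiable one_ne_zero) (γ t)).hasFDerivAt.comp_hasDerivAt t (hγd t)
    exact hasDerivAt_pi.1 h1 i
  have hcont := cont_integrand hF v (u - v) i
  have := intervalIntegral.integral_eq_sub_of_hasDerivAt
    (f := fun s => F (γ s) i) (f' := fun t => fderiv ℝ F (γ t) (u - v) i)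
    (a := 0) (b := 1) (fun t _ => hFd t) (hcont.intervalIntegrable 0 1)
  rw [this]
  have h0 : γ 0 = v := by simp [hγdef]
  have h1 : γ 1 = u := by simp [hγdef]
  simp only [h0, h1]


lemma scalar_upper {n : ℕ} (η : Fin n → ℝ) (hη : ∀ i, 0 < η i)
    (A : Matrix (Fin n) (Fin n) ℝ) (c α : ℝ)
    (hkey : ∀ i, c + ∑ j ∈ Finset.univ.erase i, (η j / η i) * |A i j| ≤ A i i)
    (hαA : ∀ i, α * A i i ≤ 1) (hα0 : 0 ≤ α)
    (w : Fin n → ℝ) (W : ℝ) (hw : ∀ j, |w j| ≤ W * η j) (i : Fin n) :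
    |w i - α * ∑ j, A i j * w j| ≤ (1 - α * c) * (W * η i) := by
  have hW : 0 ≤ W := by nlinarith [hw i, hη i, abs_nonneg (w i)]
  set S := ∑ j ∈ Finset.univ.erase i, (η j / η i) * |A i j| with hSdef
  set T := ∑ j ∈ Finset.univ.erase i, A i j * w j with hTdef
  have hS0 : 0 ≤ S := Finset.sum_nonneg fun j _ => by
    have := (hη j).le; have := (hη i).le; positivity
  have hsplit : ∑ j, A i j * w j = A i i * w i + T :=
    (Finset.add_sum_erase _ _ (Finset.mem_univ i)).symm
  have hT : |T| ≤ W * (η i * S) := by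
    calc |T| ≤ ∑ j ∈ Finset.univ.erase i, |A i j * w j| := Finset.abs_sum_le_sum_abs _ _
      _ ≤ ∑ j ∈ Finset.univ.erase i, |A i j| * (W * η j) :=
          Finset.sum_le_sum fun j _ => by
            rw [abs_mul]; exact mul_le_mul_of_nonneg_left (hw j) (abs_nonneg _)
      _ = W * (η i * S) := by
          rw [hSdef, Finset.mul_sum, Finset.mul_sum]
          refine Finset.sum_congr rfl fun j _ => ?_
          field_simp [(hη i).ne']
  have h1 : 0 ≤ 1 - α * A i i := by linarith [hαA i]
  have hKi := hkey i
  rw [hsplit]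
  have e1 : |w i - α * (A i i * w i + T)| = |(1 - α * A i i) * w i - α * T| := by
    congr 1; ring
  rw [e1]
  calc |(1 - α * A i i) * w i - α * T| ≤ |(1 - α * A i i) * w i| + |α * T| := abs_sub _ _
    _ = (1 - α * A i i) * |w i| + α * |T| := by
        rw [abs_mul, abs_mul, abs_of_nonneg h1, abs_of_nonneg hα0]
    _ ≤ (1 - α * A i i) * (W * η i) + α * (W * (η i * S)) := by
        have := hw i; have := mul_le_mul_of_nonneg_left hT hα0
        nlinarith [mul_le_mul_of_nonneg_left (hw i) h1]
    _ ≤ (1 - α * c) * (W * η i) := by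
        nlinarith [mul_nonneg (mul_nonneg hW (hη i).le)
          (mul_nonneg hα0 (by linarith : (0:ℝ) ≤ A i i - c - S))]

lemma scalar_lower {n : ℕ} (η : Fin n → ℝ) (hη : ∀ i, 0 < η i)
    (A : Matrix (Fin n) (Fin n) ℝ) (c α : ℝ)
    (hkey : ∀ i, c + ∑ j ∈ Finset.univ.erase i, (η j / η i) * |A i j| ≤ A i i)
    (hα0 : 0 ≤ α)
    (w : Fin n → ℝ) (W : ℝ) (hw : ∀ j, |w j| ≤ W * η j) (i : Fin n)
    (s : ℝ) (hs : s = 1 ∨ s = -1) (hsw : s * w i = W * η i) :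
    (1 + α * c) * (W * η i) ≤ s * (w i + α * ∑ j, A i j * w j) := by
  have hW : 0 ≤ W := by nlinarith [hw i, hη i, abs_nonneg (w i)]
  set S := ∑ j ∈ Finset.univ.erase i, (η j / η i) * |A i j| with hSdef
  set T := ∑ j ∈ Finset.univ.erase i, A i j * w j with hTdef
  have hS0 : 0 ≤ S := Finset.sum_nonneg fun j _ => by
    have := (hη j).le; have := (hη i).le; positivity
  have hsplit : ∑ j, A i j * w j = A i i * w i + T :=
    (Finset.add_sum_erase _ _ (Finset.mem_univ i)).symm
  have hT : |T| ≤ W * (η i * S) := by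
    calc |T| ≤ ∑ j ∈ Finset.univ.erase i, |A i j * w j| := Finset.abs_sum_le_sum_abs _ _
      _ ≤ ∑ j ∈ Finset.univ.erase i, |A i j| * (W * η j) :=
          Finset.sum_le_sum fun j _ => by
            rw [abs_mul]; exact mul_le_mul_of_nonneg_left (hw j) (abs_nonneg _)
      _ = W * (η i * S) := by
          rw [hSdef, Finset.mul_sum, Finset.mul_sum]
          refine Finset.sum_congr rfl fun j _ => ?_
          field_simp [(hη i).ne']
  have hKi := hkey i
  have hsT : -|T| ≤ s * T := by
    rcases hs with rfl | rfl
    · simpa using neg_abs_le T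
    · have : -T ≥ -|T| := by linarith [le_abs_self T]
      simpa using this
  rw [hsplit]
  have e1 : s * (w i + α * (A i i * w i + T)) =
      (s * w i) + α * A i i * (s * w i) + α * (s * T) := by ring
  rw [e1, hsw]
  have h2 : α * (s * T) ≥ -(α * (W * (η i * S))) := by
    have := mul_le_mul_of_nonneg_left hT hα0
    nlinarith [mul_le_mul_of_nonneg_left hsT hα0]
  nlinarith [mul_nonneg (mul_nonneg hW (hη i).le)
    (mul_nonneg hα0 (by linarith : (0:ℝ) ≤ A i i - c - S))]


-- basic wNorm facts
lemma wNorm_ge {n : ℕ} (η : Fin n → ℝ) (hη : ∀ i, 0 < η i) (z : Fin n → ℝ) (j : Fin n) :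
    |z j| ≤ wNorm η z * η j := by
  have h := le_ciSup (Set.Finite.bddAbove (Set.finite_range fun i => |z i| / η i)) j
  rw [div_le_iff₀ (hη j)] at h
  exact h

lemma wNorm_nonneg {n : ℕ} [Nonempty (Fin n)] (η : Fin n → ℝ) (hη : ∀ i, 0 < η i)
    (z : Fin n → ℝ) : 0 ≤ wNorm η z := by
  obtain ⟨j⟩ := (inferInstance : Nonempty (Fin n))
  have := wNorm_ge η hη z j
  nlinarith [abs_nonneg (z j), hη j]

lemma jac_key {n : ℕ} (η : Fin n → ℝ) {F : (Fin n → ℝ) → (Fin n → ℝ)} {c : ℝ}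
    (hmono : ∀ x, logNorm η (-(jac F x)) ≤ -c) (p : Fin n → ℝ) (i : Fin n) :
    c + ∑ j ∈ Finset.univ.erase i, (η j / η i) * |jac F p i j| ≤ jac F p i i := by
  have h1 := hmono p
  unfold logNorm at h1
  have h2 : (-(jac F p)) i i + ∑ j ∈ Finset.univ.erase i,
      (η j / η i) * |(-(jac F p)) i j| ≤ -c := by
    refine le_trans ?_ h1
    exact le_ciSup (f := fun i => (-(jac F p)) i i + ∑ j ∈ Finset.univ.erase i,
      (η j / η i) * |(-(jac F p)) i j|) (Set.Finite.bddAbove (Set.finite_range _)) i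
  simp only [Matrix.neg_apply, abs_neg] at h2
  linarith

section props
variable {n : ℕ} [Nonempty (Fin n)] (η : Fin n → ℝ) (hη : ∀ i, 0 < η i)
  {F : (Fin n → ℝ) → (Fin n → ℝ)} (hF : ContDiff ℝ 1 F)
  {c α d : ℝ}
  (hmono : ∀ x, logNorm η (-(jac F x)) ≤ -c)
  (hdiag : ∀ x i, jac F x i i ≤ d)
  (hα0 : 0 < α) (hαd : α * d ≤ 1)

include hη hF hmono hdiag hα0 hαd in
lemma propB (u v : Fin n → ℝ) :
    wNorm η ((u - v) - α • (F u - F v)) ≤ (1 - α * c) * wNorm η (u - v) := by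
  set w := u - v with hwdef
  set W := wNorm η w with hWdef
  have hw : ∀ j, |w j| ≤ W * η j := wNorm_ge η hη w
  have hαA : ∀ p i, α * jac F p i i ≤ 1 := fun p i =>
    le_trans (mul_le_mul_of_nonneg_left (hdiag p i) hα0.le) hαd
  have hB : ∀ i, |((u - v) - α • (F u - F v)) i| ≤ (1 - α * c) * (W * η i) := by
    intro i
    have hcont := cont_integrand hF v w i
    have hint : (F u - F v) i = ∫ t in (0:ℝ)..1, fderiv ℝ F (v + t • w) w i := by
      rw [Pi.sub_apply]; exact diff_eq_integral hF u v i
    have e1 : ((u - v) - α • (F u - F v)) i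
        = ∫ t in (0:ℝ)..1, (w i - α * fderiv ℝ F (v + t • w) w i) := by
      rw [intervalIntegral.integral_sub intervalIntegrable_const
        ((hcont.intervalIntegrable 0 1).const_mul α),
        intervalIntegral.integral_const_mul, intervalIntegral.integral_const]
      simp [hint, hwdef]
    rw [e1]
    have key : ∀ t ∈ Set.uIoc (0:ℝ) 1,
        ‖w i - α * fderiv ℝ F (v + t • w) w i‖ ≤ (1 - α * c) * (W * η i) := by
      intro t _
      rw [Real.norm_eq_abs, fderiv_pi_apply]
      exact scalar_upper η hη (jac F (v + t • w)) c α (jac_key η hmono _) (hαA _)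
        hα0.le w W hw i
    have := intervalIntegral.norm_integral_le_of_norm_le_const key
    simpa using this
  unfold wNorm
  refine ciSup_le fun i => ?_
  rw [div_le_iff₀ (hη i)]
  calc |((u - v) - α • (F u - F v)) i| ≤ (1 - α * c) * (W * η i) := hB i
    _ = (1 - α * c) * W * η i := by ring

include hη hF hmono hdiag hα0 hαd in
lemma propA (u v : Fin n → ℝ) :
    (1 + α * c) * wNorm η (u - v) ≤ wNorm η ((u - v) + α • (F u - F v)) := by
  set w := u - v with hwdef
  set W := wNorm η w with hWdef
  have hw : ∀ j, |w j| ≤ W * η j := wNorm_ge η hη w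
  obtain ⟨i, -, hi⟩ := Finset.exists_max_image Finset.univ (fun j => |w j| / η j)
    ⟨Classical.arbitrary _, Finset.mem_univ _⟩
  have hWeq : W = |w i| / η i := by
    refine le_antisymm (ciSup_le fun j => hi j (Finset.mem_univ j)) ?_
    exact le_ciSup (Set.Finite.bddAbove (Set.finite_range fun j => |w j| / η j)) i
  obtain ⟨s, hs, hsw⟩ : ∃ s : ℝ, (s = 1 ∨ s = -1) ∧ s * w i = W * η i := by
    refine ⟨if 0 ≤ w i then 1 else -1, by split_ifs <;> simp, ?_⟩
    rw [hWeq, div_mul_cancel₀ _ (hη i).ne']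
    split_ifs with h
    · rw [abs_of_nonneg h, one_mul]
    · rw [abs_of_neg (lt_of_not_ge h)]; ring
  have hcont := cont_integrand hF v w i
  have hint : (F u - F v) i = ∫ t in (0:ℝ)..1, fderiv ℝ F (v + t • w) w i := by
    rw [Pi.sub_apply]; exact diff_eq_integral hF u v i
  have e1 : s * (((u - v) + α • (F u - F v)) i)
      = ∫ t in (0:ℝ)..1, s * (w i + α * fderiv ℝ F (v + t • w) w i) := by
    rw [intervalIntegral.integral_const_mul,
      intervalIntegral.integral_add intervalIntegrable_const
        ((hcont.intervalIntegrable 0 1).const_mul α),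
      intervalIntegral.integral_const_mul, intervalIntegral.integral_const]
    simp [hint, hwdef]
  have hlow : (1 + α * c) * (W * η i) ≤ s * (((u - v) + α • (F u - F v)) i) := by
    rw [e1]
    have : ∀ t ∈ Set.Icc (0:ℝ) 1,
        (fun _ : ℝ => (1 + α * c) * (W * η i)) t
          ≤ s * (w i + α * fderiv ℝ F (v + t • w) w i) := by
      intro t _
      rw [fderiv_pi_apply]
      exact scalar_lower η hη (jac F (v + t • w)) c α (jac_key η hmono _) hα0.le
        w W hw i s hs hsw
    have h2 := intervalIntegral.integral_mono_on (μ := MeasureTheory.volume) zero_le_one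
      intervalIntegrable_const
      ((continuous_const.mul (continuous_const.add (continuous_const.mul hcont))).intervalIntegrable 0 1)
      this
    simpa [hwdef] using h2
  have habs : s * (((u - v) + α • (F u - F v)) i) ≤ |((u - v) + α • (F u - F v)) i| := by
    rcases hs with rfl | rfl
    · rw [one_mul]; exact le_abs_self _
    · rw [neg_one_mul]; exact neg_le_abs _
  have := le_trans hlow habs
  have hfin : (1 + α * c) * W ≤ |((u - v) + α • (F u - F v)) i| / η i := by
    rw [le_div_iff₀ (hη i)]; nlinarith
  exact le_trans hfin (le_ciSup
    (Set.Finite.bddAbove (Set.finite_range fun j => |((u - v) + α • (F u - F v)) j| / η j)) i)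

end props


/-- Cayley method: strongly monotone case. -/
theorem stmt_11 {n : ℕ} (η : Fin n → ℝ) (hη : ∀ i, 0 < η i)
    (F : (Fin n → ℝ) → (Fin n → ℝ)) (hF : ContDiff ℝ 1 F)
    (c : ℝ) (hc : 0 < c) (hmono : ∀ x, logNorm η (-(jac F x)) ≤ -c)
    (d : ℝ) (hd : 0 < d) (hdiag : ∀ x i, jac F x i i ≤ d)
    (xs : Fin n → ℝ) (hxs : F xs = 0)
    (α : ℝ) (hα : α ∈ Set.Ioc (0 : ℝ) (1 / d))
    (x y : ℕ → (Fin n → ℝ))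
    (hy : ∀ k, y k + α • F (y k) = x k)
    (hx : ∀ k, x (k + 1) = (2 : ℝ) • y k - x k) :
    (∀ k, wNorm η (x (k + 1) - xs) ≤ ((1 - α * c) / (1 + α * c)) * wNorm η (x k - xs)) ∧
    Tendsto x atTop (nhds xs) := by
  rcases Nat.eq_zero_or_pos n with hn0 | hn
  · haveI : IsEmpty (Fin n) := by subst hn0; infer_instance
    have hz : ∀ z : Fin n → ℝ, wNorm η z = 0 := fun z => by
      unfold wNorm
      exact Real.iSup_of_isEmpty _
    constructor
    · intro k; rw [hz, hz, mul_zero]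
    · have hxx : x = fun _ => xs := funext fun k => funext fun i => isEmptyElim i
      rw [hxx]
      exact tendsto_const_nhds
  · haveI : Nonempty (Fin n) := ⟨⟨0, hn⟩⟩
    obtain ⟨hα0, hα1⟩ := hα
    have hαd : α * d ≤ 1 := (le_div_iff₀ hd).mp hα1
    have hcled : c ≤ d := by
      have i0 : Fin n := Classical.arbitrary _
      have h1 := jac_key η hmono xs i0
      have h2 := hdiag xs i0
      have h3 : 0 ≤ ∑ j ∈ Finset.univ.erase i0, (η j / η i0) * |jac F xs i0 j| :=
        Finset.sum_nonneg fun j _ => by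
          have := (hη j).le; have := (hη i0).le; positivity
      linarith
    have hαc1 : α * c ≤ 1 := le_trans (by nlinarith) hαd
    have h1ac : 0 < 1 + α * c := by nlinarith
    have hρ0 : 0 ≤ (1 - α * c) / (1 + α * c) := div_nonneg (by linarith) h1ac.le
    have hρ1 : (1 - α * c) / (1 + α * c) < 1 := by
      rw [div_lt_one h1ac]; nlinarith
    have step : ∀ k, wNorm η (x (k + 1) - xs)
        ≤ ((1 - α * c) / (1 + α * c)) * wNorm η (x k - xs) := by
      intro k
      have e1 : x (k + 1) - xs = (y k - xs) - α • (F (y k) - F xs) := by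
        rw [hx k, ← hy k, hxs, sub_zero]
        module
      have e2 : x k - xs = (y k - xs) + α • (F (y k) - F xs) := by
        rw [← hy k, hxs, sub_zero]
        module
      have hB := propB η hη hF hmono hdiag hα0 hαd (y k) xs
      have hA := propA η hη hF hmono hdiag hα0 hαd (y k) xs
      rw [e1]
      calc wNorm η ((y k - xs) - α • (F (y k) - F xs))
          ≤ (1 - α * c) * wNorm η (y k - xs) := hB
        _ ≤ ((1 - α * c) / (1 + α * c)) * wNorm η ((y k - xs) + α • (F (y k) - F xs)) := by
            rw [div_mul_eq_mul_div, le_div_iff₀ h1ac]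
            nlinarith [mul_le_mul_of_nonneg_left hA (show (0:ℝ) ≤ 1 - α * c by linarith)]
        _ = ((1 - α * c) / (1 + α * c)) * wNorm η (x k - xs) := by rw [← e2]
    refine ⟨step, ?_⟩
    have hgeom : ∀ k, wNorm η (x k - xs)
        ≤ ((1 - α * c) / (1 + α * c)) ^ k * wNorm η (x 0 - xs) := by
      intro k
      induction k with
      | zero => simp
      | succ k ih =>
        calc wNorm η (x (k + 1) - xs)
            ≤ ((1 - α * c) / (1 + α * c)) * wNorm η (x k - xs) := step k
          _ ≤ ((1 - α * c) / (1 + α * c)) *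
              (((1 - α * c) / (1 + α * c)) ^ k * wNorm η (x 0 - xs)) :=
              mul_le_mul_of_nonneg_left ih hρ0
          _ = ((1 - α * c) / (1 + α * c)) ^ (k + 1) * wNorm η (x 0 - xs) := by ring
    have hpow := (tendsto_pow_atTop_nhds_zero_of_lt_one hρ0 hρ1).mul_const
      (wNorm η (x 0 - xs))
    rw [zero_mul] at hpow
    have htend0 : Tendsto (fun k => wNorm η (x k - xs)) atTop (nhds 0) :=
      squeeze_zero (fun k => wNorm_nonneg η hη _) hgeom hpow
    rw [tendsto_pi_nhds]
    intro i
    rw [tendsto_iff_dist_tendsto_zero]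
    have hb : ∀ k, dist (x k i) (xs i) ≤ wNorm η (x k - xs) * η i := fun k => by
      rw [Real.dist_eq]
      have := wNorm_ge η hη (x k - xs) i
      simpa using this
    exact squeeze_zero (fun k => dist_nonneg) hb (by simpa using htend0.mul_const (η i) : Tendsto (fun k => wNorm η (x k - xs) * η i) atTop (nhds 0))
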